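/- Fix x ∈ ℝ⁴ and for v⃗ ∈ ℝ³ set v⁰ = (1+|v⃗|²)^{1/2}, v = (v⁰, v⃗), and Ψ(v⃗) = e^{-i x·v} = e^{-i(x⁰v⁰ − x⃗·v⃗)}. If |x|² − (x·x)((v⁰)²+|v⃗|²) ≠ 0, then Ψ(v⃗) = −2i v⁰ · (x⁰ v⃗ + v⁰ x⃗) · ∇_{v⃗} Ψ(v⃗) / (|x|² − (x·x)((v⁰)²+|v⃗|²)), where ∇_{v⃗} is the gradient with respect to v⃗ ∈ ℝ³ and · on the left of ∇ is the Euclidean dot product in ℝ³. -/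

import Mathlib

/-!
Statement 3: the pointwise identity
`Ψ(v⃗) = −2i v⁰ (x⁰v⃗ + v⁰x⃗)·∇Ψ(v⃗) / (|x|² − (x·x)((v⁰)²+|v⃗|²))`
for `Ψ(v⃗) = e^{-i x·v}`, `v = ((1+|v⃗|²)^{1/2}, v⃗)`.
-/

open Real Complex
open scoped InnerProductSpace

noncomputable section

abbrev V3 := EuclideanSpace ℝ (Fin 3)

theorem deriv_g_aux (x0 : ℝ) (xv v : V3) :
    HasFDerivAt (fun w : V3 => x0 * Real.sqrt (1 + ‖w‖ ^ 2) - ⟪xv, w⟫_ℝ)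
      ((x0 / Real.sqrt (1 + ‖v‖ ^ 2)) • innerSL ℝ v - innerSL ℝ xv) v := by
  have hpos : (0:ℝ) < 1 + ‖v‖ ^ 2 := by positivity
  have h1 : HasFDerivAt (fun w : V3 => 1 + ‖w‖ ^ 2) (2 • innerSL ℝ v) v := by
    simpa using (hasFDerivAt_id v).norm_sq.const_add 1
  have h2 : HasDerivAt Real.sqrt (1 / (2 * Real.sqrt (1 + ‖v‖ ^ 2))) (1 + ‖v‖ ^ 2) :=
    Real.hasDerivAt_sqrt hpos.ne'
  have h3 := (h2.comp_hasFDerivAt v h1).const_mul x0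
  have h4 := h3.sub (innerSL ℝ xv).hasFDerivAt
  refine h4.congr_fderiv ?_
  ext u
  have hs : Real.sqrt (1 + ‖v‖ ^ 2) ≠ 0 := (Real.sqrt_pos.mpr hpos).ne'
  simp [real_inner_smul_left]
  ring_nf

theorem exp_gradient_identity (x0 : ℝ) (xv v : V3)
    (h : (x0 ^ 2 + ‖xv‖ ^ 2) -
        (x0 ^ 2 - ‖xv‖ ^ 2) * (Real.sqrt (1 + ‖v‖ ^ 2) ^ 2 + ‖v‖ ^ 2) ≠ 0) :
    Complex.exp (-Complex.I * ((x0 * Real.sqrt (1 + ‖v‖ ^ 2) - ⟪xv, v⟫_ℝ : ℝ) : ℂ)) =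
      -2 * Complex.I * ((Real.sqrt (1 + ‖v‖ ^ 2) : ℝ) : ℂ) *
        fderiv ℝ
          (fun w : V3 =>
            Complex.exp (-Complex.I * ((x0 * Real.sqrt (1 + ‖w‖ ^ 2) - ⟪xv, w⟫_ℝ : ℝ) : ℂ)))
          v (x0 • v + Real.sqrt (1 + ‖v‖ ^ 2) • xv) /
        (((x0 ^ 2 + ‖xv‖ ^ 2) -
            (x0 ^ 2 - ‖xv‖ ^ 2) * (Real.sqrt (1 + ‖v‖ ^ 2) ^ 2 + ‖v‖ ^ 2) : ℝ) : ℂ) := by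
  have hpos : (0:ℝ) < 1 + ‖v‖ ^ 2 := by positivity
  set s : ℝ := Real.sqrt (1 + ‖v‖ ^ 2) with hsdef
  have hs2 : s ^ 2 = 1 + ‖v‖ ^ 2 := Real.sq_sqrt hpos.le
  have hs0 : s ≠ 0 := (Real.sqrt_pos.mpr hpos).ne'
  set L : V3 →L[ℝ] ℝ := (x0 / s) • innerSL ℝ v - innerSL ℝ xv with hL
  have hg : HasFDerivAt (fun w : V3 => x0 * Real.sqrt (1 + ‖w‖ ^ 2) - ⟪xv, w⟫_ℝ) L v :=
    deriv_g_aux x0 xv v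
  have hgc : HasFDerivAt
      (fun w : V3 => ((x0 * Real.sqrt (1 + ‖w‖ ^ 2) - ⟪xv, w⟫_ℝ : ℝ) : ℂ))
      (Complex.ofRealCLM.comp L) v := Complex.ofRealCLM.hasFDerivAt.comp v hg
  have hF : HasFDerivAt
      (fun w : V3 => -Complex.I * ((x0 * Real.sqrt (1 + ‖w‖ ^ 2) - ⟪xv, w⟫_ℝ : ℝ) : ℂ))
      ((-Complex.I) • Complex.ofRealCLM.comp L) v := hgc.const_mul (-Complex.I)
  have hΨ : HasFDerivAt
      (fun w : V3 =>
        Complex.exp (-Complex.I * ((x0 * Real.sqrt (1 + ‖w‖ ^ 2) - ⟪xv, w⟫_ℝ : ℝ) : ℂ)))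
      (Complex.exp (-Complex.I * ((x0 * s - ⟪xv, v⟫_ℝ : ℝ) : ℂ)) •
        ((-Complex.I) • Complex.ofRealCLM.comp L)) v := by
    exact (Complex.hasDerivAt_exp _).comp_hasFDerivAt v hF
  rw [hΨ.fderiv]
  set Ψ : ℂ := Complex.exp (-Complex.I * ((x0 * s - ⟪xv, v⟫_ℝ : ℝ) : ℂ)) with hΨdef
  have hLu : L (x0 • v + s • xv) = x0 ^ 2 * ‖v‖ ^ 2 / s - s * ‖xv‖ ^ 2 := by
    simp only [hL, ContinuousLinearMap.sub_apply, ContinuousLinearMap.smul_apply,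
      innerSL_apply_apply, smul_eq_mul, inner_add_right, real_inner_smul_right,
      real_inner_self_eq_norm_sq, real_inner_comm v xv]
    field_simp
    ring
  have hD : (((x0 ^ 2 + ‖xv‖ ^ 2) - (x0 ^ 2 - ‖xv‖ ^ 2) * (s ^ 2 + ‖v‖ ^ 2) : ℝ) : ℂ) ≠ 0 :=
    Complex.ofReal_ne_zero.mpr h
  have key : (x0 ^ 2 + ‖xv‖ ^ 2) - (x0 ^ 2 - ‖xv‖ ^ 2) * (s ^ 2 + ‖v‖ ^ 2)
      = -2 * s * (x0 ^ 2 * ‖v‖ ^ 2 / s - s * ‖xv‖ ^ 2) := by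
    have hss : s * (x0 ^ 2 * ‖v‖ ^ 2 / s) = x0 ^ 2 * ‖v‖ ^ 2 := by field_simp
    linear_combination 2 * hss + (-x0 ^ 2 - ‖xv‖ ^ 2) * hs2
  simp only [ContinuousLinearMap.smul_apply, ContinuousLinearMap.comp_apply,
    Complex.ofRealCLM_apply, hLu, smul_eq_mul]
  rw [eq_div_iff hD]
  push_cast [key]
  have hI := Complex.I_mul_I
  linear_combination ((-2) * (s:ℂ) * ((x0:ℂ) ^ 2 * (‖v‖:ℂ) ^ 2 / (s:ℂ) - (s:ℂ) * (‖xv‖:ℂ) ^ 2) * Ψ) * hI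

end
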